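/- Let n ≥ 2, let z₀, q₁, …, q_n ∈ ℂ be distinct points, let m₀ ≥ 1 and k₁, …, k_n ≥ 2 be integers with m₀ − (k₁ + ⋯ + k_n) = −2, and let c ∈ ℂ, c ≠ 0. Then the rational function g(z) = c·(z − z₀)^{m₀} / ∏_{j=1}^n (z − q_j)^{k_j} cannot have vanishing residue at every q_j; that is, there exists some j such that the coefficient of (z − q_j)^{−1} in the Laurent expansion of g at q_j is nonzero. -/

import Mathlib

open Finset

open Polynomial Filter Topology



lemma ratShape_isOpen (D : ℂ[X]) : IsOpen {z : ℂ | D.eval z ≠ 0} := by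
  have : Continuous fun z : ℂ => D.eval z := D.continuous_aeval
  exact isOpen_ne.preimage this

lemma key_deriv (r N D : ℂ[X]) (a : ℂ) (s : ℕ) (hs : 1 ≤ s) {z : ℂ} (hz : D.eval z ≠ 0) :
    HasDerivAt (fun w => r.eval w + (w - a) ^ s * (N.eval w / D.eval w))
      ((derivative r).eval z + (z - a) ^ (s - 1) *
        ((C (s:ℂ) * N * D + (X - C a) * (derivative N * D - N * derivative D)).eval z
          / (D * D).eval z)) z := by
  have h1 : HasDerivAt (fun w : ℂ => (w - a) ^ s) ((s:ℂ) * (z - a) ^ (s - 1)) z := by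
    simpa using (((hasDerivAt_id z).sub_const a).fun_pow s)
  have h2 : HasDerivAt (fun w => N.eval w / D.eval w)
      (((derivative N).eval z * D.eval z - N.eval z * (derivative D).eval z) / (D.eval z) ^ 2) z :=
    (N.hasDerivAt z).div (D.hasDerivAt z) hz
  have h := (r.hasDerivAt z).fun_add (h1.fun_mul h2)
  refine h.congr_deriv (Eq.symm ?_)
  simp only [eval_add, eval_mul, eval_sub, eval_pow, eval_X, eval_C]
  have hsz : (z - a) ^ s = (z - a) ^ (s - 1) * (z - a) := by
    rw [← pow_succ]; congr 1; omega
  field_simp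
  rw [hsz]; ring

lemma key (m : ℕ) : ∀ (s : ℕ), m < s → ∀ (r N D : ℂ[X]) (a : ℂ), D.eval a ≠ 0 →
    iteratedDeriv m (fun z => r.eval z + (z - a) ^ s * (N.eval z / D.eval z)) a
      = (derivative^[m] r).eval a := by
  induction m with
  | zero =>
    intro s hs r N D a _
    simp [iteratedDeriv_zero, zero_pow (by omega : s ≠ 0)]
  | succ m IH =>
    intro s hs r N D a ha
    rw [iteratedDeriv_succ']
    have hU : {z : ℂ | D.eval z ≠ 0} ∈ 𝓝 a := (ratShape_isOpen D).mem_nhds ha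
    have hev : deriv (fun z => r.eval z + (z - a) ^ s * (N.eval z / D.eval z)) =ᶠ[𝓝 a]
        (fun z => (derivative r).eval z + (z - a) ^ (s - 1) *
          ((C (s:ℂ) * N * D + (X - C a) * (derivative N * D - N * derivative D)).eval z
            / (D * D).eval z)) := by
      filter_upwards [hU] with z hz
      exact (key_deriv r N D a (s := s) (by omega) hz).deriv
    rw [hev.iteratedDeriv_eq m]
    rw [IH (s - 1) (by omega) (derivative r) _ (D * D) a (by simpa using ha)]
    rw [Function.iterate_succ_apply]


lemma partial_frac {n : ℕ} (gg : Fin n → ℂ[X]) (A : ℂ[X]) (hg : ∀ i, (gg i).Monic)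
    (hcop : Set.Pairwise Set.univ fun i j => IsCoprime (gg i) (gg j))
    (hdegA : A.degree < (∏ i, gg i).degree) :
    ∃ r : Fin n → ℂ[X], (∀ i, (r i).degree < (gg i).degree) ∧
      A = ∑ i, r i * ∏ t ∈ univ.erase i, gg t := by
  classical
  obtain ⟨q₀, r, hdegr, hPF⟩ := div_eq_quo_add_sum_rem_div (RatFunc ℂ) A
    (g := gg) (s := univ) (fun i _ => hg i)
    (fun i _ j _ hij => hcop (Set.mem_univ i) (Set.mem_univ j) hij)
  refine ⟨r, fun i => hdegr i (mem_univ i), ?_⟩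
  set φ := algebraMap ℂ[X] (RatFunc ℂ) with hφ
  have hinj : Function.Injective φ := IsFractionRing.injective _ _
  have hgne : ∀ i, φ (gg i) ≠ 0 := fun i h => (hg i).ne_zero (hinj (by simpa using h))
  have hBfac : ∀ i, (∏ t, gg t) = gg i * ∏ t ∈ univ.erase i, gg t :=
    fun i => (Finset.mul_prod_erase univ gg (mem_univ i)).symm
  have hBne : φ (∏ i, gg i) ≠ 0 := by
    rw [map_prod]; exact prod_ne_zero_iff.2 fun i _ => hgne i
  have hid : A = q₀ * ∏ i, gg i + ∑ i, r i * ∏ t ∈ univ.erase i, gg t := by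
    apply hinj
    have h1 : φ A / φ (∏ i, gg i) = φ q₀ + ∑ i, φ (r i) / φ (gg i) := by
      simpa [map_prod] using hPF
    have h2 : φ A = φ q₀ * φ (∏ i, gg i) + ∑ i, φ (r i) / φ (gg i) * φ (∏ t, gg t) := by
      rw [div_eq_iff hBne] at h1
      rw [h1, add_mul, Finset.sum_mul]
    have h3 : ∀ i, φ (r i) / φ (gg i) * φ (∏ t, gg t)
        = φ (r i * ∏ t ∈ univ.erase i, gg t) := by
      intro i
      rw [hBfac i, map_mul, map_mul]
      have := hgne i
      field_simp
    rw [h2, map_add, map_mul, map_sum]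
    exact congrArg _ (Finset.sum_congr rfl fun i _ => h3 i)
  -- now show q₀ = 0
  have hBne' : (∏ i, gg i) ≠ 0 := (monic_prod_of_monic _ _ fun i _ => hg i).ne_zero
  have hsumlt : (∑ i, r i * ∏ t ∈ univ.erase i, gg t).degree < (∏ i, gg i).degree := by
    refine lt_of_le_of_lt (degree_sum_le _ _) ?_
    rw [Finset.sup_lt_iff (by simpa [bot_lt_iff_ne_bot, degree_eq_bot] using hBne')]
    intro i _
    have hPe : (∏ t ∈ univ.erase i, gg t) ≠ 0 :=
      (monic_prod_of_monic _ _ fun t _ => hg t).ne_zero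
    calc (r i * ∏ t ∈ univ.erase i, gg t).degree
        = (r i).degree + (∏ t ∈ univ.erase i, gg t).degree := degree_mul
      _ < (gg i).degree + (∏ t ∈ univ.erase i, gg t).degree := by
          exact WithBot.add_lt_add_right (by simpa [degree_eq_bot] using hPe)
            (hdegr i (mem_univ i))
      _ = (∏ i, gg i).degree := by rw [hBfac i, degree_mul]
  have hq₀ : q₀ = 0 := by
    by_contra hq
    have h0 : (∏ i, gg i).degree ≤ (q₀ * ∏ i, gg i).degree := by
      rw [degree_mul]
      calc (∏ i, gg i).degree = 0 + (∏ i, gg i).degree := (zero_add _).symm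
        _ ≤ q₀.degree + (∏ i, gg i).degree :=
            add_le_add_left (zero_le_degree_iff.2 hq) _
    have h1 : q₀ * ∏ i, gg i = A - ∑ i, r i * ∏ t ∈ univ.erase i, gg t := by
      rw [hid]; ring
    rw [h1] at h0
    have h2 : (A - ∑ i, r i * ∏ t ∈ univ.erase i, gg t).degree < (∏ i, gg i).degree :=
      lt_of_le_of_lt (degree_sub_le _ _) (max_lt hdegA hsumlt)
    exact absurd (lt_of_le_of_lt h0 h2) (lt_irrefl _)
  rw [hq₀] at hid
  simpa using hid



lemma term_id (a : ℂ) (kk l : ℕ) (ρ : ℂ) (hkk : 2 ≤ kk) (hl : l < kk)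
    (hρ : l = kk - 1 → ρ = 0) :
    C (ρ / ((l : ℂ) + 1 - (kk : ℂ))) * (C (l : ℂ) * (X - C a) ^ (l - 1)) * (X - C a)
      - C ((kk : ℂ) - 1) * (C (ρ / ((l : ℂ) + 1 - (kk : ℂ))) * (X - C a) ^ l)
      = C ρ * (X - C a) ^ l := by
  by_cases hlk : l = kk - 1
  · rw [hρ hlk]
    simp
  · have hne : (l : ℂ) + 1 - (kk : ℂ) ≠ 0 := by
      intro h
      have h2 : ((l + 1 : ℕ) : ℂ) = ((kk : ℕ) : ℂ) := by push_cast; linear_combination h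
      have h3 : l + 1 = kk := by exact_mod_cast h2
      omega
    by_cases hl0 : l = 0
    · subst hl0
      have hne0 : (1 : ℂ) - (kk : ℂ) ≠ 0 := by
        intro h; apply hne; push_cast; linear_combination h
      simp only [Nat.cast_zero, map_zero, zero_mul, mul_zero, pow_zero, mul_one, zero_sub]
      rw [← C_mul, ← C_neg]
      congr 1
      rw [show (0 : ℂ) + 1 - (kk : ℂ) = 1 - (kk : ℂ) from by ring]
      field_simp
      ring
    · have hP : (X - C a) ^ (l - 1) * (X - C a) = (X - C a) ^ l := by
        rw [← pow_succ]; congr 1; omega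
      have hstep : C (ρ / ((l : ℂ) + 1 - (kk : ℂ))) * (C (l : ℂ) * (X - C a) ^ (l - 1)) * (X - C a)
          - C ((kk : ℂ) - 1) * (C (ρ / ((l : ℂ) + 1 - (kk : ℂ))) * (X - C a) ^ l)
          = C (ρ / ((l : ℂ) + 1 - (kk : ℂ)) * l - ((kk : ℂ) - 1) * (ρ / ((l : ℂ) + 1 - (kk : ℂ))))
            * (X - C a) ^ l := by
        rw [← hP]
        simp only [C_sub, C_mul]
        ring
      rw [hstep]
      congr 2
      field_simp
      ring

section Main

variable (n : ℕ) (z₀ : ℂ) (q : Fin n → ℂ) (m₀ : ℕ) (k : Fin n → ℕ) (c : ℂ)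

theorem stmt15_aux (hn : 2 ≤ n)
    (hq : Function.Injective q) (hzq : ∀ j, z₀ ≠ q j)
    (hm₀ : 1 ≤ m₀) (hk : ∀ j, 2 ≤ k j)
    (hdeg : (m₀ : ℤ) - ∑ j, (k j : ℤ) = -2)
    (hc : c ≠ 0)
    (hcon : ∀ j : Fin n,
      iteratedDeriv (k j - 1)
          (fun z => c * (z - z₀) ^ m₀ / ∏ i ∈ univ.erase j, (z - q i) ^ k i)
          (q j) / (Nat.factorial (k j - 1)) = 0) : False := by
  classical
  have hsumk : ∑ j, k j = m₀ + 2 := by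
    have h2 : ((∑ j, k j : ℕ) : ℤ) = (m₀ : ℤ) + 2 := by
      push_cast
      linarith [hdeg]
    exact_mod_cast h2
  set g : Fin n → ℂ[X] := fun i => (X - C (q i)) ^ k i with hgdef
  set A : ℂ[X] := C c * (X - C z₀) ^ m₀ with hAdef
  have hgmon : ∀ i, (g i).Monic := fun i => (monic_X_sub_C _).pow _
  have hcop : Set.Pairwise Set.univ fun i j => IsCoprime (g i) (g j) :=
    fun i _ j _ hij => ((Polynomial.pairwise_coprime_X_sub_C hq) hij).pow
  have hdegA : A.degree = (m₀ : WithBot ℕ) := by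
    rw [hAdef, degree_C_mul hc, degree_pow, degree_X_sub_C]
    simp
  have hdegB : (∏ i, g i).degree = ((m₀ + 2 : ℕ) : WithBot ℕ) := by
    rw [degree_prod, ← hsumk]
    push_cast
    refine Finset.sum_congr rfl fun i _ => ?_
    rw [hgdef]
    simp [degree_pow, degree_X_sub_C]
  obtain ⟨r, hdegr, hA⟩ := partial_frac g A hgmon hcop
    (by rw [hdegA, hdegB]; exact_mod_cast Nat.lt_add_of_pos_right (by norm_num))
  have hBjne : ∀ j, (∏ i ∈ univ.erase j, g i).eval (q j) ≠ 0 := by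
    intro j
    rw [eval_prod]
    refine prod_ne_zero_iff.2 fun i hi => ?_
    have hij : i ≠ j := (Finset.mem_erase.1 hi).1
    have : q j - q i ≠ 0 := sub_ne_zero.2 fun h => hij (hq h.symm)
    simp only [hgdef, eval_pow, eval_sub, eval_X, eval_C]
    exact pow_ne_zero _ this
  have hres : ∀ j, (taylor (q j) (r j)).coeff (k j - 1) = 0 := by
    intro j
    set Bj := ∏ i ∈ univ.erase j, g i with hBj
    set Wj := ∑ i ∈ univ.erase j, r i * ∏ t ∈ (univ.erase i).erase j, g t with hWj
    have hsplit : A = r j * Bj + g j * Wj := by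
      rw [hA, ← Finset.sum_erase_add univ _ (mem_univ j)]
      rw [hWj, Finset.mul_sum, add_comm]
      congr 1
      refine Finset.sum_congr rfl fun i hi => ?_
      have hji : j ∈ univ.erase i := by
        simp only [Finset.mem_erase, Finset.mem_univ, and_true] at hi ⊢
        exact fun h => hi h.symm
      rw [← Finset.mul_prod_erase (univ.erase i) g hji]
      ring
    have hev : (fun z => c * (z - z₀) ^ m₀ / ∏ i ∈ univ.erase j, (z - q i) ^ k i)
        =ᶠ[𝓝 (q j)] fun z => (r j).eval z + (z - q j) ^ (k j) * (Wj.eval z / Bj.eval z) := by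
      filter_upwards [(ratShape_isOpen Bj).mem_nhds (hBjne j)] with z hz
      have h1 : (∏ i ∈ univ.erase j, (z - q i) ^ k i) = Bj.eval z := by
        rw [hBj, eval_prod]
        exact (Finset.prod_congr rfl fun i _ => by simp [hgdef]).symm
      have h2 : c * (z - z₀) ^ m₀ = A.eval z := by simp [hAdef]
      rw [h1, h2]
      have h3 : A.eval z = (r j).eval z * Bj.eval z + (z - q j) ^ (k j) * Wj.eval z := by
        conv_lhs => rw [hsplit]
        simp [hgdef]
      rw [h3]
      field_simp
    have hkey := key (k j - 1) (k j) (by have := hk j; omega) (r j) Wj Bj (q j) (hBjne j)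
    have h0 := hcon j
    rw [_root_.div_eq_zero_iff] at h0
    have h0' : iteratedDeriv (k j - 1)
          (fun z => c * (z - z₀) ^ m₀ / ∏ i ∈ univ.erase j, (z - q i) ^ k i) (q j) = 0 := by
      rcases h0 with h | h
      · exact h
      · exact absurd h (by exact_mod_cast (Nat.factorial_ne_zero _))
    rw [hev.iteratedDeriv_eq] at h0'
    rw [hkey] at h0'
    have hhd := congrFun (Polynomial.factorial_smul_hasseDeriv (R := ℂ) (k j - 1)) (r j)
    rw [LinearMap.smul_apply] at hhd
    rw [taylor_coeff]
    have := congrArg (fun p => Polynomial.eval (q j) p) hhd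
    simp only [nsmul_eq_mul, eval_mul, eval_natCast] at this
    rw [h0'] at this
    have hfac : ((k j - 1).factorial : ℂ) ≠ 0 := by exact_mod_cast (Nat.factorial_ne_zero _)
    exact (mul_eq_zero.1 this).resolve_left hfac
  -- Part II : construct the antiderivative numerator/denominator
  set S : Fin n → ℂ[X] := fun j =>
    ∑ l ∈ Finset.range (k j), C ((taylor (q j) (r j)).coeff l / ((l : ℂ) + 1 - (k j : ℂ))) *
      (X - C (q j)) ^ l with hSdef
  have hSid : ∀ j, derivative (S j) * (X - C (q j)) - C ((k j : ℂ) - 1) * S j = r j := by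
    intro j
    have hnd : (taylor (q j) (r j)).natDegree < k j := by
      rw [natDegree_taylor]
      rcases eq_or_ne (r j) 0 with h | h
      · simp only [h, natDegree_zero]
        have := hk j; omega
      · refine (natDegree_lt_iff_degree_lt h).2 ?_
        have := hdegr j
        rw [hgdef] at this
        simpa [degree_pow, degree_X_sub_C] using this
    have htay : ∑ l ∈ Finset.range (k j), C ((taylor (q j) (r j)).coeff l) * (X - C (q j)) ^ l
        = r j := by
      have h1 : (taylor (q j) (r j)).sum (fun i a => C a * (X - C (q j)) ^ i)
          = ∑ l ∈ Finset.range (k j), C (((taylor (q j)) (r j)).coeff l) * (X - C (q j)) ^ l :=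
        sum_over_range' _ (fun m => by simp) _ hnd
      rw [← h1]
      exact sum_taylor_eq _ _
    rw [hSdef]
    simp only [map_sum]
    rw [Finset.sum_mul, Finset.mul_sum, ← Finset.sum_sub_distrib]
    conv_rhs => rw [← htay]
    refine Finset.sum_congr rfl fun l hl => ?_
    rw [derivative_mul, derivative_C, zero_mul, zero_add, derivative_pow,
      derivative_X_sub_C, mul_one]
    exact term_id (q j) (k j) l ((taylor (q j) (r j)).coeff l) (hk j)
      (Finset.mem_range.1 hl) (fun h => by rw [h]; exact hres j)
  set Q : ℂ[X] := ∏ i, (X - C (q i)) ^ (k i - 1) with hQdef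
  set P : ℂ[X] := ∑ j, S j * ∏ i ∈ univ.erase j, (X - C (q i)) ^ (k i - 1) with hPdef
  have hQne : ∀ z : ℂ, (∀ i, z ≠ q i) → Q.eval z ≠ 0 := by
    intro z hz
    rw [hQdef, eval_prod]
    exact prod_ne_zero_iff.2 fun i _ => by
      simp only [eval_pow, eval_sub, eval_X, eval_C]
      exact pow_ne_zero _ (sub_ne_zero.2 (hz i))
  -- the key differential identity as polynomials
  have hid3 : (derivative P * Q - P * derivative Q) * ∏ i, g i = A * (Q * Q) := by
    apply eq_of_infinite_eval_eq
    have hsub : {z : ℂ | ∀ i, z ≠ q i} ⊆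
        {x | eval x ((derivative P * Q - P * derivative Q) * ∏ i, g i) = eval x (A * (Q * Q))} := by
      intro z hz
      have hgz : ∀ i, (g i).eval z ≠ 0 := fun i => by
        simp only [hgdef, eval_pow, eval_sub, eval_X, eval_C]
        exact pow_ne_zero _ (sub_ne_zero.2 (hz i))
      have hQz : Q.eval z ≠ 0 := hQne z hz
      set F : ℂ → ℂ := fun w => ∑ j, (S j).eval w / (w - q j) ^ (k j - 1) with hF
      -- first derivative computation
      have h1 : HasDerivAt F (∑ j, (r j).eval z / (z - q j) ^ (k j)) z := by
        refine HasDerivAt.fun_sum fun j _ => ?_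
        have hzq : z - q j ≠ 0 := sub_ne_zero.2 (hz j)
        have hden : HasDerivAt (fun w : ℂ => (w - q j) ^ (k j - 1))
            (((k j - 1 : ℕ) : ℂ) * (z - q j) ^ (k j - 1 - 1)) z := by
          simpa using ((hasDerivAt_id z).sub_const (q j)).fun_pow (k j - 1)
        have hdiv := ((S j).hasDerivAt z).fun_div hden (pow_ne_zero _ hzq)
        refine hdiv.congr_deriv (Eq.symm ?_)
        obtain ⟨e, he⟩ : ∃ e, k j = e + 2 := ⟨k j - 2, by have := hk j; omega⟩
        have hSz := congrArg (eval z) (hSid j)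
        simp only [eval_sub, eval_mul, eval_C, eval_X] at hSz
        rw [he] at hSz
        rw [he]
        have h1' : e + 2 - 1 = e + 1 := by omega
        have h2' : e + 1 - 1 = e := by omega
        rw [h1', h2']
        have hr : (r j).eval z = (derivative (S j)).eval z * (z - q j)
            - ((e : ℂ) + 1) * (S j).eval z := by
          rw [← hSz]; push_cast; ring
        rw [div_eq_div_iff (pow_ne_zero _ hzq) (pow_ne_zero _ (pow_ne_zero _ hzq)), hr]
        push_cast
        ring
      -- second derivative computation
      have hFeq : F =ᶠ[𝓝 z] fun w => P.eval w / Q.eval w := by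
        have hopen : IsOpen {w : ℂ | ∀ i, w ≠ q i} := by
          have : {w : ℂ | ∀ i, w ≠ q i} = (Set.range q)ᶜ := by
            ext w
            simp only [Set.mem_setOf_eq, Set.mem_compl_iff, Set.mem_range, not_exists]
            exact ⟨fun h i hi => h i hi.symm, fun h i hi => h i hi.symm⟩
          rw [this]
          exact (Set.finite_range q).isClosed.isOpen_compl
        filter_upwards [hopen.mem_nhds hz] with w hw
        have hQw : Q.eval w ≠ 0 := hQne w hw
        rw [hF, hPdef]
        simp only [eval_finset_sum, eval_mul]
        rw [Finset.sum_div]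
        refine Finset.sum_congr rfl fun j _ => ?_
        have hQfac : Q.eval w = (w - q j) ^ (k j - 1) *
            (∏ i ∈ univ.erase j, (X - C (q i)) ^ (k i - 1)).eval w := by
          rw [hQdef, ← Finset.mul_prod_erase univ _ (mem_univ j), eval_mul]
          simp only [eval_pow, eval_sub, eval_X, eval_C]
        have hPe : (∏ i ∈ univ.erase j, (X - C (q i)) ^ (k i - 1)).eval w ≠ 0 := by
          rw [eval_prod]
          exact prod_ne_zero_iff.2 fun i _ => by
            simp only [eval_pow, eval_sub, eval_X, eval_C]
            exact pow_ne_zero _ (sub_ne_zero.2 (hw i))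
        rw [hQfac]
        have hzw : (w - q j) ^ (k j - 1) ≠ 0 := pow_ne_zero _ (sub_ne_zero.2 (hw j))
        field_simp
      have h2 : HasDerivAt F
          (((derivative P).eval z * Q.eval z - P.eval z * (derivative Q).eval z)
            / (Q.eval z) ^ 2) z :=
        ((P.hasDerivAt z).div (Q.hasDerivAt z) hQz).congr_of_eventuallyEq hFeq
      have h3 := h1.unique h2
      -- partial fractions evaluated
      have h4 : (∑ j, (r j).eval z / (z - q j) ^ (k j)) = A.eval z / (∏ i, g i).eval z := by
        have hAz := congrArg (eval z) hA
        simp only [eval_finset_sum, eval_mul] at hAz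
        rw [hAz, Finset.sum_div]
        refine Finset.sum_congr rfl fun j _ => ?_
        have hBfac : (∏ i, g i).eval z = (g j).eval z *
            (∏ t ∈ univ.erase j, g t).eval z := by
          rw [← Finset.mul_prod_erase univ _ (mem_univ j), eval_mul]
        have hPe : (∏ t ∈ univ.erase j, g t).eval z ≠ 0 := by
          rw [eval_prod]
          exact prod_ne_zero_iff.2 fun i _ => hgz i
        rw [hBfac]
        have h5 : (z - q j) ^ (k j) = (g j).eval z := by
          show _ = ((X - C (q j)) ^ k j).eval z
          simp only [eval_pow, eval_sub, eval_X, eval_C]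
        rw [h5]
        first
        | exact (mul_div_mul_right hPe _ _).symm
        | exact (mul_div_mul_right _ _ hPe).symm
        | · field_simp [hPe, hgz j]
            ring
      rw [h4] at h3
      have hBz : (∏ i, g i).eval z ≠ 0 := by
        rw [eval_prod]; exact prod_ne_zero_iff.2 fun i _ => hgz i
      simp only [Set.mem_setOf_eq, eval_mul, eval_sub]
      rw [div_eq_div_iff hBz (pow_ne_zero 2 hQz)] at h3
      rw [← h3]
      ring
    refine Set.Infinite.mono hsub ?_
    have : {z : ℂ | ∀ i, z ≠ q i} = (Set.range q)ᶜ := by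
      ext w
      simp only [Set.mem_setOf_eq, Set.mem_compl_iff, Set.mem_range, not_exists]
      exact ⟨fun h i hi => h i hi.symm, fun h i hi => h i hi.symm⟩
    rw [this]
    exact (Set.finite_range q).infinite_compl
  -- Part III : contradiction via the polynomial H
  have hQz₀ : Q.eval z₀ ≠ 0 := hQne z₀ hzq
  set H : ℂ[X] := C (Q.eval z₀) * P - C (P.eval z₀) * Q with hHdef
  have hQne0 : Q ≠ 0 := fun h => hQz₀ (by rw [h]; simp)
  have hAne0 : A ≠ 0 := by
    rw [hAdef]
    exact mul_ne_zero (by simpa using hc) (pow_ne_zero _ (X_sub_C_ne_zero z₀))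
  have hPQne : derivative P * Q - P * derivative Q ≠ 0 := by
    intro h
    rw [h, zero_mul] at hid3
    rcases mul_eq_zero.1 hid3.symm with h1 | h2
    · exact hAne0 h1
    · exact absurd h2 (mul_ne_zero hQne0 hQne0)
  have hHQid : derivative H * Q - H * derivative Q
      = C (Q.eval z₀) * (derivative P * Q - P * derivative Q) := by
    rw [hHdef]
    simp only [derivative_sub, derivative_mul, derivative_C, zero_mul, zero_add]
    ring
  have hHne : H ≠ 0 := by
    intro h
    rw [h] at hHQid
    simp only [derivative_zero, zero_mul, mul_zero, sub_zero, zero_sub] at hHQid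
    rcases mul_eq_zero.1 hHQid.symm with h1 | h2
    · exact hQz₀ (by simpa using h1)
    · exact hPQne h2
  have hdvd0 : (X - C z₀) ^ m₀ ∣ derivative H * Q - H * derivative Q := by
    have hcop2 : IsCoprime ((X - C z₀) ^ m₀) (∏ i, g i) := by
      refine IsCoprime.pow_left (IsCoprime.prod_right fun i _ => IsCoprime.pow_right ?_)
      exact isCoprime_X_sub_C_of_isUnit_sub (sub_ne_zero.2 (hzq i)).isUnit
    refine hcop2.dvd_of_dvd_mul_right ?_
    have heq : (derivative H * Q - H * derivative Q) * ∏ i, g i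
        = (X - C z₀) ^ m₀ * (C (Q.eval z₀) * C c * (Q * Q)) := by
      calc (derivative H * Q - H * derivative Q) * ∏ i, g i
          = C (Q.eval z₀) * ((derivative P * Q - P * derivative Q) * ∏ i, g i) := by
            rw [hHQid]; ring
        _ = C (Q.eval z₀) * (A * (Q * Q)) := by rw [hid3]
        _ = (X - C z₀) ^ m₀ * (C (Q.eval z₀) * C c * (Q * Q)) := by rw [hAdef]; ring
    exact ⟨C (Q.eval z₀) * C c * (Q * Q), heq⟩
  have hdvdH : ∀ t, t ≤ m₀ + 1 → (X - C z₀) ^ t ∣ H := by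
    intro t
    induction t with
    | zero => intro _; simp
    | succ t IH =>
      intro ht
      obtain ⟨K, hK⟩ := IH (by omega)
      rcases Nat.eq_zero_or_pos t with h0 | hpos
      · subst h0
        rw [pow_one]
        refine dvd_iff_isRoot.2 ?_
        rw [hHdef]
        simp only [IsRoot.def, eval_sub, eval_mul, eval_C]
        ring
      · obtain ⟨e, he⟩ : ∃ e, t = e + 1 := ⟨t - 1, by omega⟩
        subst he
        set M : ℂ[X] := C ((e + 1 : ℕ) : ℂ) * K * Q
            + (X - C z₀) * (derivative K * Q - K * derivative Q) with hM
        have h1 : derivative H * Q - H * derivative Q = (X - C z₀) ^ e * M := by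
          rw [hK, hM]
          have hder : derivative ((X - C z₀) ^ (e + 1) * K)
              = C ((e + 1 : ℕ) : ℂ) * (X - C z₀) ^ e * K
                + (X - C z₀) ^ (e + 1) * derivative K := by
            rw [derivative_mul, derivative_pow, derivative_X_sub_C, mul_one]
            simp only [Nat.add_sub_cancel]
            try ring
          rw [hder]
          ring
        have hdvdM : (X - C z₀) ∣ M := by
          have h2 : (X - C z₀) ^ e * ((X - C z₀) * (X - C z₀) ^ (m₀ - 1 - e))
              ∣ (X - C z₀) ^ e * M := by
            rw [← h1]
            have h3 : (X - C z₀) ^ e * ((X - C z₀) * (X - C z₀) ^ (m₀ - 1 - e))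
                = (X - C z₀) ^ m₀ := by
              rw [← pow_succ', ← pow_add]
              congr 1
              omega
            rw [h3]
            exact hdvd0
          have h4 := (mul_dvd_mul_iff_left (pow_ne_zero e (X_sub_C_ne_zero z₀))).1 h2
          exact dvd_trans (dvd_mul_right _ _) h4
        have hdvdCKQ : (X - C z₀) ∣ C ((e + 1 : ℕ) : ℂ) * K * Q := by
          have h7 : (X - C z₀) ∣ (X - C z₀) * (derivative K * Q - K * derivative Q) :=
            dvd_mul_right _ _
          have h8 : C ((e + 1 : ℕ) : ℂ) * K * Q
              = M - (X - C z₀) * (derivative K * Q - K * derivative Q) := by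
            rw [hM]; ring
          rw [h8]
          exact dvd_sub hdvdM h7
        have hp : Prime (X - C z₀) := prime_X_sub_C z₀
        rcases hp.dvd_mul.1 hdvdCKQ with h5 | h6
        · rcases hp.dvd_mul.1 h5 with h7 | h8
          · exfalso
            have hC : (C ((e + 1 : ℕ) : ℂ)) ≠ 0 :=
              C_ne_zero.2 (by exact_mod_cast Nat.succ_ne_zero e)
            have := Polynomial.degree_le_of_dvd h7 hC
            rw [degree_X_sub_C, degree_C (by exact_mod_cast Nat.succ_ne_zero e)] at this
            exact absurd this (by norm_num)
          · obtain ⟨K', hK'⟩ := h8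
            exact ⟨K', by rw [hK, hK', pow_succ]; ring⟩
        · exact absurd (dvd_iff_isRoot.1 h6) hQz₀
  have hfinal := hdvdH (m₀ + 1) le_rfl
  have hsum1 : ∑ i, (k i - 1) ≤ m₀ := by
    have h1 : ∑ i, (k i - 1) + ∑ _i : Fin n, 1 = ∑ i, k i := by
      rw [← Finset.sum_add_distrib]
      exact Finset.sum_congr rfl fun i _ => by have := hk i; omega
    simp only [Finset.sum_const, card_univ, Fintype.card_fin, smul_eq_mul, mul_one] at h1
    omega
  have hdegQ : Q.natDegree ≤ m₀ := by
    refine le_trans (natDegree_prod_le _ _) (le_trans ?_ hsum1)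
    refine Finset.sum_le_sum fun i _ => ?_
    rw [natDegree_pow, natDegree_X_sub_C, mul_one]
  have hdegS : ∀ j, (S j).natDegree ≤ k j - 1 := by
    intro j
    rw [hSdef]
    refine natDegree_sum_le_of_forall_le _ _ fun l hl => ?_
    refine le_trans natDegree_mul_le ?_
    rw [natDegree_C, natDegree_pow, natDegree_X_sub_C, mul_one]
    simp only [Finset.mem_range] at hl
    omega
  have hdegP : P.natDegree ≤ m₀ := by
    rw [hPdef]
    refine natDegree_sum_le_of_forall_le _ _ fun j _ => ?_
    refine le_trans natDegree_mul_le (le_trans ?_ hsum1)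
    have h2 : (∏ i ∈ univ.erase j, (X - C (q i)) ^ (k i - 1)).natDegree
        ≤ ∑ i ∈ univ.erase j, (k i - 1) := by
      refine le_trans (natDegree_prod_le _ _) ?_
      refine Finset.sum_le_sum fun i _ => ?_
      rw [natDegree_pow, natDegree_X_sub_C, mul_one]
    calc (S j).natDegree + (∏ i ∈ univ.erase j, (X - C (q i)) ^ (k i - 1)).natDegree
        ≤ (k j - 1) + ∑ i ∈ univ.erase j, (k i - 1) := add_le_add (hdegS j) h2
      _ = ∑ i, (k i - 1) := Finset.add_sum_erase univ (fun i => k i - 1) (mem_univ j)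
  have hdegH : H.natDegree ≤ m₀ := by
    rw [hHdef]
    refine le_trans (natDegree_sub_le _ _) ?_
    refine max_le (le_trans (natDegree_C_mul_le _ _) hdegP)
      (le_trans (natDegree_C_mul_le _ _) hdegQ)
  have hcontra := Polynomial.natDegree_le_of_dvd hfinal hHne
  rw [natDegree_pow, natDegree_X_sub_C, mul_one] at hcontra
  omega

end Main

/-- Genus-zero residue lemma: a meromorphic differential on ℙ¹ with a unique
zero and n ≥ 2 higher-order poles has a nonzero residue at some pole.  The
residue at q_j is the (k_j−1)st Taylor coefficient at q_j of the regular part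
c·(z−z₀)^{m₀}/∏_{i≠j}(z−q_i)^{k_i}. -/
theorem stmt_15 (n : ℕ) (hn : 2 ≤ n) (z₀ : ℂ) (q : Fin n → ℂ)
    (hq : Function.Injective q) (hzq : ∀ j, z₀ ≠ q j)
    (m₀ : ℕ) (hm₀ : 1 ≤ m₀) (k : Fin n → ℕ) (hk : ∀ j, 2 ≤ k j)
    (hdeg : (m₀ : ℤ) - ∑ j, (k j : ℤ) = -2)
    (c : ℂ) (hc : c ≠ 0) :
    ∃ j : Fin n,
      iteratedDeriv (k j - 1)
          (fun z => c * (z - z₀) ^ m₀ / ∏ i ∈ univ.erase j, (z - q i) ^ k i)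
          (q j) / (Nat.factorial (k j - 1)) ≠ 0 := by
  by_contra hcon
  push_neg at hcon
  exact stmt15_aux n z₀ q m₀ k c hn hq hzq hm₀ hk hdeg hc hcon
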